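/- Let X be a wide-sense stationary process with spectral measure μ, ψ ∈ L¹(ℝ), a ≥ 2 an integer, b > 0, and ψ_{j,k}(t) = a^{−j} ψ(a^{−j}t − k) for j ∈ ℤ, k ∈ bℤ. Then for each j, the random sequence (⟨X, ψ_{j,k}⟩)_{k∈bℤ} is wide-sense stationary with covariance E(⟨X,ψ_{j,k}⟩ conj(⟨X,ψ_{j,k'}⟩)) = ∫_ℝ e^{iλ(k−k')a^j} |ψ̂(a^jλ)|² dμ(λ). -/

import Mathlib

open MeasureTheory
open scoped ENNReal

/-- Let `X` be a wide-sense stationary process with spectral measure `μ` (stochastic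
integrals realized by the Kolmogorov isometry `S`), `ψ ∈ L¹(ℝ)` with Fourier transform
`ψ̂`, `a ≥ 2` an integer, `b > 0`, and `ψ_{j,k}(t) = a^{-j}ψ(a^{-j}t - k)`.  Then the
random coefficients `⟨X,ψ_{j,k}⟩ = ∫ e^{iλka^j} conj(ψ̂)(a^jλ) dΦ(λ)` form, for each
`j`, a wide-sense stationary sequence over `k ∈ bℤ` with covariance
`E(⟨X,ψ_{j,k}⟩ conj ⟨X,ψ_{j,k'}⟩) = ∫ e^{iλ(k-k')a^j} |ψ̂(a^jλ)|² dμ(λ)`. -/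
theorem stmt_12 {Ω : Type*} [MeasureSpace Ω] [IsProbabilityMeasure (volume : Measure Ω)]
    (μ : Measure ℝ) [IsFiniteMeasure μ]
    (S : Lp ℂ 2 μ →ₗᵢ[ℂ] Lp ℂ 2 (volume : Measure Ω))
    (ψ : ℝ → ℂ) (hψ : Integrable ψ (volume : Measure ℝ))
    (ψhat : ℝ → ℂ)
    (hψhat : ∀ lam : ℝ, ψhat lam = ∫ t : ℝ, ψ t * Complex.exp (-(Complex.I * lam * t)) ∂volume)
    (a : ℕ) (ha : 2 ≤ a) (b : ℝ) (hb : 0 < b) (j : ℤ)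
    (hmem : ∀ k : ℝ, MemLp
      (fun lam : ℝ => Complex.exp (Complex.I * lam * k * ((a : ℂ) ^ j)) *
        (starRingEnd ℂ) (ψhat ((a : ℝ) ^ j * lam))) 2 μ)
    (coef : ℤ → Lp ℂ 2 (volume : Measure Ω))
    (hcoef : ∀ n : ℤ, coef n = S ((hmem ((n : ℝ) * b)).toLp
      (fun lam : ℝ => Complex.exp (Complex.I * lam * ((((n : ℝ) * b : ℝ)) : ℂ) * ((a : ℂ) ^ j)) *
        (starRingEnd ℂ) (ψhat ((a : ℝ) ^ j * lam))))) :
    ∀ n n' : ℤ,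
      (∫ ω, (coef n : Ω → ℂ) ω * (starRingEnd ℂ) ((coef n' : Ω → ℂ) ω) ∂(volume : Measure Ω))
        = ∫ lam : ℝ, Complex.exp (Complex.I * lam * (((n : ℝ) * b - (n' : ℝ) * b)) *
            ((a : ℂ) ^ j)) * ((‖ψhat ((a : ℝ) ^ j * lam)‖ ^ 2 : ℝ) : ℂ) ∂μ := by
  intro n n'
  have key : (∫ ω, (coef n : Ω → ℂ) ω * (starRingEnd ℂ) ((coef n' : Ω → ℂ) ω) ∂(volume : Measure Ω))
      = @inner ℂ _ _ (coef n') (coef n) := by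
    rw [MeasureTheory.L2.inner_def]
    refine integral_congr_ae (Filter.Eventually.of_forall fun ω => ?_)
    simp [RCLike.inner_apply, mul_comm]
  rw [key, hcoef n, hcoef n', LinearIsometry.inner_map_map, MeasureTheory.L2.inner_def]
  have h1 := (hmem ((n : ℝ) * b)).coeFn_toLp
  have h2 := (hmem ((n' : ℝ) * b)).coeFn_toLp
  refine integral_congr_ae ?_
  filter_upwards [h1, h2] with lam e1 e2
  rw [RCLike.inner_apply, e1, e2]
  set z := ψhat ((a : ℝ) ^ j * lam) with hz
  have hexp : ∀ c : ℂ, (starRingEnd ℂ) (Complex.exp c) = Complex.exp ((starRingEnd ℂ) c) :=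
    fun c => (Complex.exp_conj c).symm
  have hconja : (starRingEnd ℂ) ((a : ℂ) ^ j) = (a : ℂ) ^ j := by
    simp [map_zpow₀]
  rw [map_mul, hexp, starRingEnd_self_apply]
  rw [map_mul, map_mul, map_mul, hconja, Complex.conj_I, Complex.conj_ofReal, Complex.conj_ofReal]
  rw [mul_mul_mul_comm, ← Complex.exp_add]
  have hnorm : z * (starRingEnd ℂ) z = ((‖z‖ ^ 2 : ℝ) : ℂ) := by
    rw [Complex.mul_conj]
    norm_cast
    exact (Complex.normSq_eq_norm_sq z).trans (by rfl)
  rw [mul_comm ((starRingEnd ℂ) z) z, hnorm]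
  congr 1
  push_cast
  ring
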